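/- Let E be the open region bounded by a simple polygonal chain C from x to y together with the straight line segment from x to y. If a line segment uv both enters and exits E, then uv intersects a vertex or an edge of the chain C. -/
import Mathlib

/-- A preconnected set meeting an open set `E` and the complement of its
closure must meet the frontier of `E`. -/
lemma aux_preconnected_inter_frontier {α : Type*} [TopologicalSpace α]
    {s E : Set α} (hs : IsPreconnected s) (hE : IsOpen E)
    (h1 : (s ∩ E).Nonempty) (h2 : (s \ closure E).Nonempty) :
    (s ∩ frontier E).Nonempty := by
  by_contra h
  rw [Set.not_nonempty_iff_eq_empty] at h
  have hsub : s ⊆ E ∪ (closure E)ᶜ := by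
    intro z hz
    by_cases hzE : z ∈ E
    · exact Or.inl hzE
    · by_cases hzc : z ∈ closure E
      · have hzf : z ∈ frontier E := by rw [hE.frontier_eq]; exact ⟨hzc, hzE⟩
        exact absurd (Set.mem_inter hz hzf) (by rw [h]; exact Set.notMem_empty z)
      · exact Or.inr hzc
  obtain ⟨w, hws, hwE, hwc⟩ := hs E (closure E)ᶜ hE isClosed_closure.isOpen_compl hsub h1
    ⟨h2.choose, h2.choose_spec.1, h2.choose_spec.2⟩
  exact hwc (subset_closure hwE)

/-- Let `E` be the open region bounded by a simple polygonal chain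
`C = ⟨c 0, …, c m⟩` from `x` to `y` together with the segment `xy` (so the
frontier of `E` is the union of the chain's edges with `segment x y`). If the
segment `uv` both enters and exits `E` (it meets `E` but both endpoints lie
outside the closure of `E`), then `uv` intersects a vertex or an edge of the
chain `C`. -/
theorem segment_enter_exit_meets_chain (m : ℕ)
    (c : Fin (m + 1) → EuclideanSpace ℝ (Fin 2))
    (x y : EuclideanSpace ℝ (Fin 2)) (hx : c 0 = x) (hy : c (Fin.last m) = y)
    (E : Set (EuclideanSpace ℝ (Fin 2))) (hEopen : IsOpen E)
    (hfront : frontier E =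
      (⋃ i : Fin m, segment ℝ (c i.castSucc) (c i.succ)) ∪ segment ℝ x y)
    (u v : EuclideanSpace ℝ (Fin 2))
    (hu : u ∉ closure E) (hv : v ∉ closure E)
    (hmeets : (segment ℝ u v ∩ E).Nonempty) :
    (segment ℝ u v ∩ ⋃ i : Fin m, segment ℝ (c i.castSucc) (c i.succ)).Nonempty := by
  obtain ⟨p, hpuv, hpE⟩ := hmeets
  -- p is not on the frontier since E is open
  have hpnf : p ∉ frontier E := fun hf =>
    (Set.eq_empty_iff_forall_notMem.mp hEopen.inter_frontier_eq p) ⟨hpE, hf⟩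
  -- segment u p crosses the frontier at some point a
  obtain ⟨a, haup, haf⟩ := aux_preconnected_inter_frontier
    ((convex_segment u p).isPreconnected) hEopen ⟨p, right_mem_segment ℝ u p, hpE⟩
    ⟨u, left_mem_segment ℝ u p, hu⟩
  -- segment p v crosses the frontier at some point b
  obtain ⟨b, hbpv, hbf⟩ := aux_preconnected_inter_frontier
    ((convex_segment p v).isPreconnected) hEopen ⟨p, left_mem_segment ℝ p v, hpE⟩
    ⟨v, right_mem_segment ℝ p v, hv⟩
  -- betweenness facts
  have hwupv : Wbtw ℝ u p v := mem_segment_iff_wbtw.mp hpuv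
  have hwuap : Wbtw ℝ u a p := mem_segment_iff_wbtw.mp haup
  have hwpbv : Wbtw ℝ p b v := mem_segment_iff_wbtw.mp hbpv
  have hauv : a ∈ segment ℝ u v := (hwupv.trans_left hwuap).mem_segment
  have hbuv : b ∈ segment ℝ u v := (hwupv.trans_right hwpbv).mem_segment
  rw [hfront] at haf hbf
  rcases haf with haC | haxy
  · exact ⟨a, hauv, haC⟩
  rcases hbf with hbC | hbxy
  · exact ⟨b, hbuv, hbC⟩
  -- both a and b on segment x y: then p ∈ segment a b ⊆ segment x y ⊆ frontier, contradiction
  exfalso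
  have hwapv : Wbtw ℝ a p v := hwupv.trans_left_right hwuap
  have hwapb : Wbtw ℝ a p b := hwapv.trans_right_left hwpbv
  have hpxy : p ∈ segment ℝ x y :=
    (convex_segment x y).segment_subset haxy hbxy hwapb.mem_segment
  exact hpnf (by rw [hfront]; exact Or.inr hpxy)
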